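/- As z → 1⁻, the quantity ζ(z)^{3/2} defined by (2/3)ζ(z)^{3/2} = ln((1+√(1-z²))/z) - √(1-z²) satisfies ζ(z)^{3/2} = √2·(1-z)^{3/2} + (9√2/20)·(1-z)^{5/2} + O((1-z)^{7/2}). -/

import Mathlib

lemma key_bound (w : ℝ) (hw0 : 0 < w) (hw : w < 1/2) :
    |(Real.sqrt 2 + 3 * Real.sqrt 2 / 4 * w) * (1 - w) - Real.sqrt (2 - w)| ≤ 3 * w ^ 2 := by
  set s := Real.sqrt (2 - w) with hs
  set A := (Real.sqrt 2 + 3 * Real.sqrt 2 / 4 * w) * (1 - w) with hA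
  have hs2 : s ^ 2 = 2 - w := Real.sq_sqrt (by linarith)
  have hs1 : 1 ≤ s := by
    rw [hs, show (1:ℝ) = Real.sqrt 1 by simp]
    exact Real.sqrt_le_sqrt (by linarith)
  have h2 : Real.sqrt 2 ^ 2 = 2 := Real.sq_sqrt (by norm_num)
  have h2a : 1 ≤ Real.sqrt 2 := by nlinarith [Real.sqrt_nonneg 2]
  have hA2 : A ^ 2 = 2 * ((1 + 3/4*w) * (1-w)) ^ 2 := by
    rw [hA]; nlinarith [h2]
  have hAnn : 0 ≤ A := by
    rw [hA]
    exact mul_nonneg (by nlinarith) (by linarith)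
  have hinner : (0:ℝ) ≤ 23/8 - 3/4*w - 9/8*w^2 := by nlinarith [mul_pos hw0 hw0]
  have hsq : A ^ 2 ≤ s ^ 2 := by nlinarith [mul_nonneg (sq_nonneg w) hinner]
  have hAs : A ≤ s := by nlinarith [mul_nonneg hAnn (le_trans zero_le_one hs1)]
  have hlow : s - A ≤ 3 * w ^ 2 := by
    nlinarith [mul_nonneg (sub_nonneg.2 hAs) (by linarith : (0:ℝ) ≤ s + A - 1), sq_nonneg w]
  rw [abs_le]; constructor <;> nlinarith [sq_nonneg w]

lemma abs_d_le (t : ℝ) (ht0 : 1/2 < t) (ht1 : t < 1) :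
    |(-(3/2) * Real.sqrt (1 - t^2) / t + (3 * Real.sqrt 2 / 2) * (1-t) ^ ((1:ℝ)/2)
      + (9 * Real.sqrt 2 / 8) * (1-t) ^ ((3:ℝ)/2))| ≤ 9 * (1-t) ^ ((5:ℝ)/2) := by
  have hw0 : 0 < 1 - t := by linarith
  have ht' : (0:ℝ) < t := by linarith
  have hsm : Real.sqrt (1 - t^2) = Real.sqrt (1-t) * Real.sqrt (1+t) := by
    rw [← Real.sqrt_mul hw0.le]; congr 1; ring
  have hr1 : (1-t) ^ ((1:ℝ)/2) = Real.sqrt (1-t) := (Real.sqrt_eq_rpow (1-t)).symm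
  have hr3 : (1-t) ^ ((3:ℝ)/2) = (1-t) * Real.sqrt (1-t) := by
    rw [show ((3:ℝ)/2) = 1 + 1/2 by norm_num, Real.rpow_add hw0, Real.rpow_one, hr1]
  have hr5 : (1-t) ^ ((5:ℝ)/2) = (1-t)^2 * Real.sqrt (1-t) := by
    rw [show ((5:ℝ)/2) = 2 + 1/2 by norm_num, Real.rpow_add hw0, hr1,
      show ((2:ℝ):ℝ) = ((2:ℕ):ℝ) by norm_num, Real.rpow_natCast]
  rw [hsm, hr1, hr3, hr5]
  have hkey : |(Real.sqrt 2 + 3 * Real.sqrt 2 / 4 * (1-t)) * t - Real.sqrt (1+t)| ≤ 3 * (1-t)^2 := by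
    have := key_bound (1-t) hw0 (by linarith)
    rw [show (1 - (1-t)) = t by ring, show (2 - (1-t)) = 1+t by ring] at this
    exact this
  have hrn : 0 ≤ Real.sqrt (1-t) := Real.sqrt_nonneg _
  have hE : -(3/2) * (Real.sqrt (1-t) * Real.sqrt (1+t)) / t + (3 * Real.sqrt 2 / 2) * Real.sqrt (1-t)
      + (9 * Real.sqrt 2 / 8) * ((1-t) * Real.sqrt (1-t))
      = Real.sqrt (1-t) * ((3/(2*t)) * ((Real.sqrt 2 + 3 * Real.sqrt 2 / 4 * (1-t)) * t - Real.sqrt (1+t))) := by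
    field_simp
    ring
  rw [hE, abs_mul, abs_of_nonneg hrn]
  have hEb : |(3/(2*t)) * ((Real.sqrt 2 + 3 * Real.sqrt 2 / 4 * (1-t)) * t - Real.sqrt (1+t))| ≤ 9 * (1-t)^2 := by
    rw [abs_mul]
    have h1 : |(3:ℝ)/(2*t)| ≤ 3 := by
      rw [abs_of_pos (div_pos (by norm_num) (by linarith))]
      rw [div_le_iff₀ (by linarith)]
      linarith
    calc |(3:ℝ)/(2*t)| * |(Real.sqrt 2 + 3 * Real.sqrt 2 / 4 * (1-t)) * t - Real.sqrt (1+t)|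
        ≤ 3 * (3 * (1-t)^2) := mul_le_mul h1 hkey (abs_nonneg _) (by norm_num)
      _ = 9 * (1-t)^2 := by ring
  calc Real.sqrt (1-t) * |(3/(2*t)) * ((Real.sqrt 2 + 3 * Real.sqrt 2 / 4 * (1-t)) * t - Real.sqrt (1+t))|
      ≤ Real.sqrt (1-t) * (9 * (1-t)^2) := mul_le_mul_of_nonneg_left hEb hrn
    _ = 9 * ((1-t)^2 * Real.sqrt (1-t)) := by ring

lemma hasDerivAt_F (t : ℝ) (ht0 : 1/2 < t) (ht1 : t < 1) :
    HasDerivAt (fun x : ℝ => (3/2) * (Real.log ((1 + Real.sqrt (1 - x^2)) / x) - Real.sqrt (1 - x^2))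
        - Real.sqrt 2 * (1-x) ^ ((3:ℝ)/2) - (9 * Real.sqrt 2 / 20) * (1-x) ^ ((5:ℝ)/2))
      (-(3/2) * Real.sqrt (1 - t^2) / t + (3 * Real.sqrt 2 / 2) * (1-t) ^ ((1:ℝ)/2)
        + (9 * Real.sqrt 2 / 8) * (1-t) ^ ((3:ℝ)/2)) t := by
  have ht' : (0:ℝ) < t := by linarith
  have ht2 : (0:ℝ) < 1 - t^2 := by nlinarith
  set s := Real.sqrt (1 - t^2) with hsdef
  have hs0 : 0 < s := Real.sqrt_pos.mpr ht2
  have hs2 : s ^ 2 = 1 - t^2 := Real.sq_sqrt ht2.le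
  have h1 : HasDerivAt (fun x : ℝ => 1 - x^2) (-(↑(2:ℕ) * t ^ (2-1))) t :=
    (hasDerivAt_pow 2 t).const_sub 1
  have hsq : HasDerivAt (fun x : ℝ => Real.sqrt (1 - x^2)) (-(↑(2:ℕ) * t ^ (2-1)) / (2 * s)) t :=
    h1.sqrt ht2.ne'
  have hnum : HasDerivAt (fun x : ℝ => 1 + Real.sqrt (1 - x^2)) (-(↑(2:ℕ) * t ^ (2-1)) / (2 * s)) t :=
    hsq.const_add 1
  have hq : HasDerivAt (fun x : ℝ => (1 + Real.sqrt (1 - x^2)) / x)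
      (((-(↑(2:ℕ) * t ^ (2-1)) / (2 * s)) * t - (1 + s) * 1) / t^2) t :=
    hnum.div (hasDerivAt_id t) ht'.ne'
  have hqpos : 0 < (1 + s) / t := div_pos (by linarith) ht'
  have hlog : HasDerivAt (fun x : ℝ => Real.log ((1 + Real.sqrt (1 - x^2)) / x))
      ((((-(↑(2:ℕ) * t ^ (2-1)) / (2 * s)) * t - (1 + s) * 1) / t^2) / ((1 + s) / t)) t :=
    hq.log hqpos.ne'
  have hone : HasDerivAt (fun x : ℝ => 1 - x) (-1) t := by
    simpa using (hasDerivAt_id t).const_sub 1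
  have hp3 : HasDerivAt (fun x : ℝ => (1-x) ^ ((3:ℝ)/2)) (-1 * ((3:ℝ)/2) * (1-t) ^ ((3:ℝ)/2 - 1)) t :=
    hone.rpow_const (Or.inl (by linarith))
  have hp5 : HasDerivAt (fun x : ℝ => (1-x) ^ ((5:ℝ)/2)) (-1 * ((5:ℝ)/2) * (1-t) ^ ((5:ℝ)/2 - 1)) t :=
    hone.rpow_const (Or.inl (by linarith))
  have hF := (((hlog.sub hsq).const_mul (3/2:ℝ)).sub (hp3.const_mul (Real.sqrt 2))).sub
    (hp5.const_mul (9 * Real.sqrt 2 / 20))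
  convert hF using 1
  case e'_4 => rfl
  case e'_5 => rfl
  case e'_8 => rfl
  have e32 : ((3:ℝ)/2 - 1) = (1:ℝ)/2 := by norm_num
  have e52 : ((5:ℝ)/2 - 1) = (3:ℝ)/2 := by norm_num
  rw [e32, e52]
  have hlogval : (((-(↑(2:ℕ) * t ^ (2-1)) / (2 * s)) * t - (1 + s) * 1) / t^2) / ((1 + s) / t)
      = -(1/(s*t)) := by
    field_simp
    ring_nf
    linear_combination (-2) * hs2
  rw [hlogval]
  have hsval : (-(↑(2:ℕ) * t ^ (2-1)) / (2 * s)) = -(t/s) := by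
    field_simp; ring
  rw [hsval]
  field_simp
  ring_nf
  linear_combination (-480) * hs2

theorem zeta_expansion_below (ζ : ℝ → ℝ)
    (hpos : ∀ z ∈ Set.Ioo (0:ℝ) 1, 0 < ζ z)
    (hdef : ∀ z ∈ Set.Ioo (0:ℝ) 1,
      (2/3) * (ζ z) ^ ((3:ℝ)/2)
        = Real.log ((1 + Real.sqrt (1 - z^2)) / z) - Real.sqrt (1 - z^2)) :
    ∃ C > 0, ∃ δ > 0, δ < 1 ∧ ∀ z, 1 - δ < z → z < 1 →
      |(ζ z) ^ ((3:ℝ)/2) - Real.sqrt 2 * (1 - z) ^ ((3:ℝ)/2)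
        - (9 * Real.sqrt 2 / 20) * (1 - z) ^ ((5:ℝ)/2)| ≤ C * (1 - z) ^ ((7:ℝ)/2) := by
  refine ⟨9, by norm_num, 1/2, by norm_num, by norm_num, fun z hz hz1 => ?_⟩
  have hz0 : (1:ℝ)/2 < z := by linarith
  have hzpos : (0:ℝ) < z := by linarith
  set F : ℝ → ℝ := fun x => (3/2) * (Real.log ((1 + Real.sqrt (1 - x^2)) / x) - Real.sqrt (1 - x^2))
      - Real.sqrt 2 * (1-x) ^ ((3:ℝ)/2) - (9 * Real.sqrt 2 / 20) * (1-x) ^ ((5:ℝ)/2) with hFdef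
  set d : ℝ → ℝ := fun x => -(3/2) * Real.sqrt (1 - x^2) / x + (3 * Real.sqrt 2 / 2) * (1-x) ^ ((1:ℝ)/2)
      + (9 * Real.sqrt 2 / 8) * (1-x) ^ ((3:ℝ)/2) with hddef
  have hzle : z ≤ 1 := hz1.le
  -- continuity of F on Icc z 1
  have hsub : ∀ x ∈ Set.Icc z 1, (1:ℝ)/2 < x := fun x hx => lt_of_lt_of_le hz0 hx.1
  have hcsqrt : ContinuousOn (fun x : ℝ => Real.sqrt (1 - x^2)) (Set.Icc z 1) :=
    (Real.continuous_sqrt.comp (continuous_const.sub (continuous_pow 2))).continuousOn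
  have hcq : ContinuousOn (fun x : ℝ => (1 + Real.sqrt (1 - x^2)) / x) (Set.Icc z 1) :=
    (continuousOn_const.add hcsqrt).div continuousOn_id
      (fun x hx => by have := hsub x hx; positivity)
  have hqpos : ∀ x ∈ Set.Icc z 1, (1 + Real.sqrt (1 - x^2)) / x ≠ 0 := by
    intro x hx
    have hx0 := hsub x hx
    have : (0:ℝ) < (1 + Real.sqrt (1 - x^2)) / x :=
      div_pos (by nlinarith [Real.sqrt_nonneg (1 - x^2)]) (by linarith)
    exact this.ne'
  have hc1x : ContinuousOn (fun x : ℝ => (1:ℝ) - x) (Set.Icc z 1) :=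
    (continuous_const.sub continuous_id).continuousOn
  have hFcont : ContinuousOn F (Set.Icc z 1) := by
    apply ContinuousOn.sub
    apply ContinuousOn.sub
    · exact (ContinuousOn.sub (hcq.log hqpos) hcsqrt).const_smul (3/2:ℝ) |>.congr (fun x _ => by
        simp [smul_eq_mul])
    · exact continuousOn_const.mul (hc1x.rpow_const (fun x _ => Or.inr (by norm_num)))
    · exact continuousOn_const.mul (hc1x.rpow_const (fun x _ => Or.inr (by norm_num)))
  have hdcont : ContinuousOn d (Set.Icc z 1) := by
    apply ContinuousOn.add
    apply ContinuousOn.add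
    · exact (continuousOn_const.mul hcsqrt).div continuousOn_id
        (fun x hx => by have := hsub x hx; positivity)
    · exact continuousOn_const.mul (hc1x.rpow_const (fun x _ => Or.inr (by norm_num)))
    · exact continuousOn_const.mul (hc1x.rpow_const (fun x _ => Or.inr (by norm_num)))
  have hint : IntervalIntegrable d MeasureTheory.volume z 1 := by
    apply ContinuousOn.intervalIntegrable
    rwa [Set.uIcc_of_le hzle]
  have hderiv : ∀ x ∈ Set.Ioo z 1, HasDerivWithinAt F (d x) (Set.Ioi x) x := by
    intro x hx
    exact (hasDerivAt_F x (by linarith [hx.1]) hx.2).hasDerivWithinAt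
  have hFTC : ∫ y in z..1, d y = F 1 - F z :=
    intervalIntegral.integral_eq_sub_of_hasDeriv_right_of_le hzle hFcont hderiv hint
  have hF1 : F 1 = 0 := by
    rw [hFdef]
    norm_num [Real.zero_rpow]
  -- pointwise bound on d over (z, 1]
  have hbound : ∀ x ∈ Set.uIoc z 1, ‖d x‖ ≤ 9 * (1-z) ^ ((5:ℝ)/2) := by
    rw [Set.uIoc_of_le hzle]
    intro x hx
    rcases hx.2.eq_or_lt with heq | hlt
    · subst heq
      have : d 1 = 0 := by
        rw [hddef]
        norm_num [Real.zero_rpow]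
      rw [this]
      simp only [norm_zero]
      have : (0:ℝ) ≤ (1-z)^((5:ℝ)/2) := Real.rpow_nonneg (by linarith) _
      linarith
    · have h1 := abs_d_le x (lt_trans hz0 hx.1) hlt
      have h2 : (1-x) ^ ((5:ℝ)/2) ≤ (1-z) ^ ((5:ℝ)/2) :=
        Real.rpow_le_rpow (by linarith) (by linarith [hx.1]) (by norm_num)
      calc ‖d x‖ ≤ 9 * (1-x) ^ ((5:ℝ)/2) := h1
        _ ≤ 9 * (1-z) ^ ((5:ℝ)/2) := by linarith
  have hnorm := intervalIntegral.norm_integral_le_of_norm_le_const hbound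
  rw [hFTC, hF1] at hnorm
  have hrw : (1:ℝ) - z > 0 := by linarith
  have h75 : (1-z) ^ ((7:ℝ)/2) = (1-z) ^ ((5:ℝ)/2) * (1-z) := by
    rw [show ((7:ℝ)/2) = 5/2 + 1 by norm_num, Real.rpow_add hrw, Real.rpow_one]
  have hzeta : (ζ z) ^ ((3:ℝ)/2)
      = (3/2) * (Real.log ((1 + Real.sqrt (1 - z^2)) / z) - Real.sqrt (1 - z^2)) := by
    have := hdef z ⟨hzpos, hz1⟩
    linarith
  have hgoal : (ζ z) ^ ((3:ℝ)/2) - Real.sqrt 2 * (1 - z) ^ ((3:ℝ)/2)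
      - (9 * Real.sqrt 2 / 20) * (1 - z) ^ ((5:ℝ)/2) = F z := by
    rw [hFdef, hzeta]
  rw [hgoal]
  have habs : |F z| = ‖(0:ℝ) - F z‖ := by
    rw [norm_sub_rev]
    simp [Real.norm_eq_abs]
  rw [habs]
  calc ‖(0:ℝ) - F z‖ ≤ 9 * (1-z) ^ ((5:ℝ)/2) * |1 - z| := hnorm
    _ = 9 * (1-z) ^ ((7:ℝ)/2) := by
        rw [abs_of_pos hrw, h75]; ring
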